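/- Let a_1 ≥ a_2 ≥ … ≥ a_n ≥ 0 with sum 1 and n ≥ 4. Then F(a_1, …, a_n) ≤ F(a_1, …, a_{n−2}, a_{n−1} + a_n, 0), where F(a_1,…,a_n) = Σ_{i<j} a_i a_j (a_i + a_j)(2 − a_i − a_j). -/

import Mathlib

/-- `F(a) = Σ_{i<j} a_i a_j (a_i + a_j)(2 - a_i - a_j)`. -/
def F {n : ℕ} (a : Fin n → ℝ) : ℝ :=
  ∑ i, ∑ j, (if i < j then a i * a j * (a i + a j) * (2 - a i - a j) else 0)

lemma F_eq {n : ℕ} (a : Fin n → ℝ) :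
    F a = 2 * (∑ i, a i) * (∑ i, (a i)^2) - (∑ i, a i) * (∑ i, (a i)^3)
      - (∑ i, (a i)^2)^2 - 2 * (∑ i, (a i)^3) + 2 * (∑ i, (a i)^4) := by
  set p1 := ∑ i, a i with hp1
  set p2 := ∑ i, (a i)^2 with hp2
  set p3 := ∑ i, (a i)^3 with hp3
  set p4 := ∑ i, (a i)^4 with hp4
  have hg : ∀ i j : Fin n, a i * a j * (a i + a j) * (2 - a i - a j)
      = (if i < j then a i * a j * (a i + a j) * (2 - a i - a j) else 0)
      + (if j < i then a i * a j * (a i + a j) * (2 - a i - a j) else 0)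
      + (if i = j then a i * a j * (a i + a j) * (2 - a i - a j) else 0) := by
    intro i j
    rcases lt_trichotomy i j with h | h | h
    · simp [h, h.ne, asymm h]
    · simp [h, lt_irrefl]
    · simp [h, h.ne', asymm h]
  have hB : (∑ i, ∑ j, (if j < i then a i * a j * (a i + a j) * (2 - a i - a j) else 0))
      = F a := by
    rw [Finset.sum_comm]
    unfold F
    refine Finset.sum_congr rfl fun i _ => Finset.sum_congr rfl fun j _ => ?_
    split_ifs with h
    · ring
    · rfl
  have hdiag : (∑ i, ∑ j, (if i = j then a i * a j * (a i + a j) * (2 - a i - a j) else 0))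
      = 4 * p3 - 4 * p4 := by
    have : ∀ i : Fin n, (∑ j, (if i = j then a i * a j * (a i + a j) * (2 - a i - a j) else 0))
        = 4 * (a i)^3 - 4 * (a i)^4 := by
      intro i
      rw [Finset.sum_ite_eq]
      simp
      ring
    rw [Finset.sum_congr rfl fun i _ => this i, Finset.sum_sub_distrib, ← Finset.mul_sum,
      ← Finset.mul_sum, hp3, hp4]
  have hG : (∑ i, ∑ j, a i * a j * (a i + a j) * (2 - a i - a j))
      = 4 * p1 * p2 - 2 * p1 * p3 - 2 * p2^2 := by
    have inner : ∀ i : Fin n, (∑ j, a i * a j * (a i + a j) * (2 - a i - a j))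
        = (2*(a i)^2 - (a i)^3) * p1 + (2*(a i) - 2*(a i)^2) * p2 - a i * p3 := by
      intro i
      rw [hp1, hp2, hp3, Finset.mul_sum, Finset.mul_sum, Finset.mul_sum,
        ← Finset.sum_add_distrib, ← Finset.sum_sub_distrib]
      exact Finset.sum_congr rfl fun j _ => by ring
    rw [Finset.sum_congr rfl fun i _ => inner i]
    rw [Finset.sum_sub_distrib, Finset.sum_add_distrib, ← Finset.sum_mul, ← Finset.sum_mul,
      ← Finset.sum_mul]
    have e1 : (∑ i, (2*(a i)^2 - (a i)^3)) = 2 * p2 - p3 := by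
      rw [Finset.sum_sub_distrib, ← Finset.mul_sum, hp2, hp3]
    have e2 : (∑ i, (2*(a i) - 2*(a i)^2)) = 2 * p1 - 2 * p2 := by
      rw [Finset.sum_sub_distrib, ← Finset.mul_sum, ← Finset.mul_sum, hp1, hp2]
    rw [e1, e2, hp3]
    ring
  have htot : (∑ i, ∑ j, a i * a j * (a i + a j) * (2 - a i - a j))
      = F a + (∑ i, ∑ j, (if j < i then a i * a j * (a i + a j) * (2 - a i - a j) else 0))
        + (∑ i, ∑ j, (if i = j then a i * a j * (a i + a j) * (2 - a i - a j) else 0)) := by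
    unfold F
    rw [← Finset.sum_add_distrib, ← Finset.sum_add_distrib]
    refine Finset.sum_congr rfl fun i _ => ?_
    rw [← Finset.sum_add_distrib, ← Finset.sum_add_distrib]
    exact Finset.sum_congr rfl fun j _ => hg i j
  rw [hG, hB, hdiag] at htot
  linarith

lemma aux_ineq (x y P1 P2 a0 : ℝ) (hxn : 0 ≤ x) (hyn : 0 ≤ y) (hyx : y ≤ x)
    (ha0n : 0 ≤ a0) (hxa0 : x ≤ a0) (hQ : P2 ≤ a0 * P1) (haP : a0 + x ≤ P1)
    (hP1e : P1 = 1 - x - y) : 0 ≤ 4 - 9*(x+y) + 4*(x+y)^2 - 4*P2 := by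
  have hP1n : (0:ℝ) ≤ P1 := by linarith
  have h1 : P2 ≤ (P1 - x) * P1 :=
    le_trans hQ (mul_le_mul_of_nonneg_right (by linarith) hP1n)
  have hB : (P1 - x) * P1 ≤ (P1 - (x+y)/2) * P1 :=
    mul_le_mul_of_nonneg_right (by linarith) hP1n
  have hC : P2 ≤ (P1 - (x+y)/2) * P1 := le_trans h1 hB
  rw [hP1e] at hC
  have hD : (0:ℝ) ≤ (x+y) * (1 - 2*(x+y)) :=
    mul_nonneg (by linarith) (by linarith)
  nlinarith [hC, hD]

theorem F_merge_last_two (n : ℕ) (hn : 4 ≤ n) (a : Fin n → ℝ)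
    (hanti : Antitone a) (hpos : ∀ i, 0 ≤ a i) (hsum : ∑ i, a i = 1) :
    F a ≤ F (fun i : Fin n =>
      if (i : ℕ) = n - 2 then a i + a ⟨n - 1, by omega⟩
      else if (i : ℕ) = n - 1 then 0 else a i) := by
  have hn2 : n - 2 < n := by omega
  have hn1 : n - 1 < n := by omega
  set k : Fin n := ⟨n - 2, hn2⟩ with hk
  set l : Fin n := ⟨n - 1, hn1⟩ with hl
  set b : Fin n → ℝ := fun i : Fin n =>
      if (i : ℕ) = n - 2 then a i + a ⟨n - 1, hn1⟩
      else if (i : ℕ) = n - 1 then 0 else a i with hbdef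
  show F a ≤ F b
  have hkl : k ≠ l := by
    simp only [hk, hl, ne_eq, Fin.mk.injEq]
    omega
  have hlk : l ∈ Finset.univ.erase k := Finset.mem_erase.2 ⟨hkl.symm, Finset.mem_univ l⟩
  set S : Finset (Fin n) := (Finset.univ.erase k).erase l with hS
  have split : ∀ f : Fin n → ℝ, (∑ i, f i) = f k + (f l + ∑ i ∈ S, f i) := by
    intro f
    rw [hS, Finset.add_sum_erase _ f hlk, Finset.add_sum_erase _ f (Finset.mem_univ k)]
  have hbk : b k = a k + a l := by
    simp only [hbdef, hk, hl]
    simp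
  have hbl : b l = 0 := by
    simp only [hbdef, hl]
    have h1 : n - 1 ≠ n - 2 := by omega
    simp [h1]
  have hbS : ∀ i ∈ S, b i = a i := by
    intro i hi
    have h1 : i ≠ l := (Finset.mem_erase.1 hi).1
    have h2 : i ≠ k := (Finset.mem_erase.1 (Finset.mem_erase.1 hi).2).1
    have h3 : (i : ℕ) ≠ n - 2 := fun h => h2 (Fin.ext h)
    have h4 : (i : ℕ) ≠ n - 1 := fun h => h1 (Fin.ext h)
    simp [hbdef, h3, h4]
  set x := a k with hx
  set y := a l with hy
  set P1 := ∑ i ∈ S, a i with hP1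
  set P2 := ∑ i ∈ S, (a i)^2 with hP2
  set P3 := ∑ i ∈ S, (a i)^3 with hP3
  set P4 := ∑ i ∈ S, (a i)^4 with hP4
  -- power sums of a
  have ea1 : (∑ i, a i) = x + (y + P1) := split a
  have ea2 : (∑ i, (a i)^2) = x^2 + (y^2 + P2) := split (fun i => (a i)^2)
  have ea3 : (∑ i, (a i)^3) = x^3 + (y^3 + P3) := split (fun i => (a i)^3)
  have ea4 : (∑ i, (a i)^4) = x^4 + (y^4 + P4) := split (fun i => (a i)^4)
  -- power sums of b
  have ebS : ∀ m : ℕ, (∑ i ∈ S, (b i)^m) = ∑ i ∈ S, (a i)^m :=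
    fun m => Finset.sum_congr rfl fun i hi => by rw [hbS i hi]
  have eb1 : (∑ i, b i) = (x + y) + (0 + P1) := by
    rw [split b, hbk, hbl]
    have := ebS 1
    simp only [pow_one] at this
    rw [this]
  have eb2 : (∑ i, (b i)^2) = (x + y)^2 + (0 + P2) := by
    rw [split (fun i => (b i)^2), hbk, hbl, ebS 2]
    norm_num
    rfl
  have eb3 : (∑ i, (b i)^3) = (x + y)^3 + (0 + P3) := by
    rw [split (fun i => (b i)^3), hbk, hbl, ebS 3]
    norm_num
    rfl
  have eb4 : (∑ i, (b i)^4) = (x + y)^4 + (0 + P4) := by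
    rw [split (fun i => (b i)^4), hbk, hbl, ebS 4]
    norm_num
    rfl
  have hP1e : P1 = 1 - x - y := by rw [ea1] at hsum; linarith
  have key : F b - F a = x * y * (4 - 9*(x+y) + 4*(x+y)^2 - 4*P2) := by
    rw [F_eq a, F_eq b, ea1, ea2, ea3, ea4, eb1, eb2, eb3, eb4, hP1e]
    ring
  -- inequality facts
  have hxn : 0 ≤ x := hpos k
  have hyn : 0 ≤ y := hpos l
  have hyx : y ≤ x := hanti (by simp [hk, hl, Fin.le_def]; omega)
  set a0 := a ⟨0, by omega⟩ with ha0
  have ha0n : 0 ≤ a0 := hpos _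
  have hxa0 : x ≤ a0 := hanti (by simp [hk, Fin.le_def])
  -- P2 ≤ a0 * P1
  have hQ : P2 ≤ a0 * P1 := by
    rw [hP1, hP2, Finset.mul_sum]
    refine Finset.sum_le_sum fun i _ => ?_
    have h1 : a i ≤ a0 := hanti (by simp [Fin.le_def])
    have h2 : 0 ≤ a i := hpos i
    nlinarith
  -- a0 + x ≤ P1
  have hz : (⟨0, by omega⟩ : Fin n) ∈ S := by
    refine Finset.mem_erase.2 ⟨?_, Finset.mem_erase.2 ⟨?_, Finset.mem_univ _⟩⟩ <;>
      · simp only [hl, hk, ne_eq, Fin.mk.injEq]; omega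
  have ho : (⟨1, by omega⟩ : Fin n) ∈ S.erase ⟨0, by omega⟩ := by
    refine Finset.mem_erase.2 ⟨?_, Finset.mem_erase.2 ⟨?_, Finset.mem_erase.2 ⟨?_, Finset.mem_univ _⟩⟩⟩ <;>
      · simp only [hl, hk, ne_eq, Fin.mk.injEq]; omega
  have hxa1 : x ≤ a ⟨1, by omega⟩ := hanti (by simp [hk, Fin.le_def]; omega)
  have haP : a0 + x ≤ P1 := by
    have h1 : a0 + (a ⟨1, by omega⟩ + ∑ i ∈ (S.erase ⟨0, by omega⟩).erase ⟨1, by omega⟩, a i) = P1 := by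
      rw [hP1, Finset.add_sum_erase _ a ho, Finset.add_sum_erase _ a hz]
    have h2 : (0:ℝ) ≤ ∑ i ∈ (S.erase ⟨0, by omega⟩).erase ⟨1, by omega⟩, a i :=
      Finset.sum_nonneg fun i _ => hpos i
    linarith
  have hfac : 0 ≤ 4 - 9*(x+y) + 4*(x+y)^2 - 4*P2 :=
    aux_ineq x y P1 P2 a0 hxn hyn hyx ha0n hxa0 hQ haP hP1e
  have hfin : 0 ≤ x * y * (4 - 9*(x+y) + 4*(x+y)^2 - 4*P2) :=
    mul_nonneg (mul_nonneg hxn hyn) hfac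
  rw [← sub_nonneg, key]
  exact hfin
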